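/- Let l ≥ 3 and let n ≥ 2 with positive integers l_1,...,l_n summing to l. Then (1/2)·Σ_{k=1}^l 2^k · a_k + 2^(binom(l,2)) · binom(l; l_1,...,l_n) < ((e^4 + 3)/4) · 2^(binom(l,2)) · binom(l; l_1,...,l_n), where a_k = 2^(binom(l-k,2)) · Σ binom(l-k; j_1,...,j_n) · ∏_i binom(l_i+2, j_i+2), summed over tuples (j_1,...,j_n) with 0 ≤ j_i ≤ l_i and Σ j_i = l-k. -/

import Mathlib

open Finset


lemma binom_aux (m Li T : ℕ) :
    ∑ ab ∈ Finset.HasAntidiagonal.antidiagonal m,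
      (if ab.1 ≤ Li ∧ ab.2 ≤ T then
        Nat.choose m ab.1 * Nat.choose (Li - ab.1 + (T - ab.2)) (Li - ab.1) else 0)
    ≤ Nat.choose (Li + T) Li := by
  rcases le_or_gt m (Li + T) with hm | hm
  · rw [Finset.Nat.sum_antidiagonal_eq_sum_range_succ_mk]
    have h1 : ∀ a ∈ Finset.range (m+1),
        (if a ≤ Li ∧ m - a ≤ T then
          Nat.choose m a * Nat.choose (Li - a + (T - (m - a))) (Li - a) else 0)
        ≤ (if a ≤ Li then Nat.choose m a * Nat.choose (Li + T - m) (Li - a) else 0) := by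
      intro a ha
      simp only [Finset.mem_range] at ha
      split_ifs with h1 h2 h3
      · have : Li - a + (T - (m - a)) = Li + T - m := by omega
        rw [this]
      · omega
      · exact Nat.zero_le _
      · exact le_rfl
    refine (Finset.sum_le_sum h1).trans ?_
    rw [Finset.sum_ite, Finset.sum_const_zero, add_zero]
    have hsub : (Finset.range (m+1)).filter (fun a => a ≤ Li) ⊆ Finset.range (Li+1) := by
      intro a ha
      simp only [Finset.mem_filter, Finset.mem_range] at ha ⊢
      omega
    refine (Finset.sum_le_sum_of_subset hsub).trans ?_
    have hv := Nat.add_choose_eq m (Li + T - m) Li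
    rw [Finset.Nat.sum_antidiagonal_eq_sum_range_succ_mk] at hv
    rw [← hv]
    have : m + (Li + T - m) = Li + T := by omega
    rw [this]
  · refine le_trans (le_of_eq (Finset.sum_eq_zero ?_)) (Nat.zero_le _)
    intro ab hab
    rw [Finset.HasAntidiagonal.mem_antidiagonal] at hab
    have : ¬(ab.1 ≤ Li ∧ ab.2 ≤ T) := by omega
    simp [this]

lemma vand {ι : Type*} [DecidableEq ι] (s : Finset ι) (L : ι → ℕ) :
    ∀ m : ℕ, ∑ j ∈ (Finset.piAntidiag s m).filter (fun j => ∀ i ∈ s, j i ≤ L i),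
      Nat.multinomial s j * Nat.multinomial s (fun i => L i - j i) ≤ Nat.multinomial s L := by
  induction s using Finset.cons_induction with
  | empty =>
    intro m
    rcases m with _ | m
    · simp
    · simp [Finset.piAntidiag_empty_of_ne_zero]
  | cons i s hi ih =>
    intro m
    set T := ∑ t ∈ s, L t with hT
    rw [Finset.sum_filter, Finset.piAntidiag_cons hi, Finset.sum_disjiUnion]
    have key : ∀ ab ∈ Finset.HasAntidiagonal.antidiagonal m,
        (∑ j ∈ (Finset.piAntidiag s ab.2).map
            (addRightEmbedding fun t => if t = i then ab.1 else 0),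
          if (∀ t ∈ Finset.cons i s hi, j t ≤ L t) then
            Nat.multinomial (Finset.cons i s hi) j *
              Nat.multinomial (Finset.cons i s hi) (fun t => L t - j t) else 0)
        ≤ (if ab.1 ≤ L i ∧ ab.2 ≤ T then
            Nat.choose m ab.1 * Nat.choose (L i - ab.1 + (T - ab.2)) (L i - ab.1) else 0)
          * Nat.multinomial s L := by
      rintro ⟨A, B⟩ hab
      rw [Finset.HasAntidiagonal.mem_antidiagonal] at hab
      rw [Finset.sum_map]
      simp only [addRightEmbedding_apply]
      have hterm : ∀ g ∈ Finset.piAntidiag s B,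
          (if (∀ t ∈ Finset.cons i s hi, (g + fun t => if t = i then A else 0) t ≤ L t) then
            Nat.multinomial (Finset.cons i s hi) (g + fun t => if t = i then A else 0) *
              Nat.multinomial (Finset.cons i s hi)
                (fun t => L t - (g + fun t => if t = i then A else 0) t) else 0)
          = (if A ≤ L i ∧ B ≤ T then
              (Nat.choose m A * Nat.choose (L i - A + (T - B)) (L i - A)) *
              (if (∀ t ∈ s, g t ≤ L t) then
                Nat.multinomial s g * Nat.multinomial s (fun t => L t - g t) else 0)
            else 0) := by
        intro g hg
        rw [Finset.mem_piAntidiag] at hg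
        obtain ⟨hgsum, hgsupp⟩ := hg
        have hgi : g i = 0 := by
          by_contra h
          exact hi (hgsupp i h)
        set j : ι → ℕ := g + fun t => if t = i then A else 0 with hj
        have hji : j i = A := by simp [hj, hgi]
        have hjt : ∀ t ∈ s, j t = g t := by
          intro t ht
          have : t ≠ i := fun h => hi (h ▸ ht)
          simp [hj, this]
        have hjsum : ∑ t ∈ s, j t = B := by
          rw [Finset.sum_congr rfl hjt, hgsum]
        have hP : (∀ t ∈ Finset.cons i s hi, j t ≤ L t) ↔ (A ≤ L i ∧ ∀ t ∈ s, g t ≤ L t) := by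
          rw [Finset.forall_mem_cons, hji]
          constructor
          · rintro ⟨h1, h2⟩
            exact ⟨h1, fun t ht => (hjt t ht) ▸ h2 t ht⟩
          · rintro ⟨h1, h2⟩
            exact ⟨h1, fun t ht => (hjt t ht).symm ▸ h2 t ht⟩
        by_cases hPc : ∀ t ∈ Finset.cons i s hi, j t ≤ L t
        · rw [if_pos hPc]
          obtain ⟨hALi, hgL⟩ := hP.mp hPc
          have hBT : B ≤ T := by
            rw [← hgsum, hT]
            exact Finset.sum_le_sum hgL
          rw [if_pos ⟨hALi, hBT⟩, if_pos hgL]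
          have e1 : Nat.multinomial (Finset.cons i s hi) j = Nat.choose m A * Nat.multinomial s g := by
            rw [Nat.multinomial_cons, hji, hjsum, hab]
            congr 1
            exact Nat.multinomial_congr hjt
          have e2 : Nat.multinomial (Finset.cons i s hi) (fun t => L t - j t)
              = Nat.choose (L i - A + (T - B)) (L i - A) * Nat.multinomial s (fun t => L t - g t) := by
            rw [Nat.multinomial_cons]
            have h3 : ∀ t ∈ s, L t - j t = L t - g t := fun t ht => by rw [hjt t ht]
            have h4 : ∑ t ∈ s, (L t - j t) = T - B := by
              rw [Finset.sum_congr rfl h3]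
              rw [hT, ← hgsum]
              exact Finset.sum_tsub_distrib s hgL
            rw [hji, h4]
            congr 1
            exact Nat.multinomial_congr h3
          rw [e1, e2]
          ring
        · rw [if_neg hPc]
          rw [hP, not_and_or] at hPc
          rcases hPc with h | h
          · rw [if_neg (fun hc => h hc.1)]
          · by_cases hAB : A ≤ L i ∧ B ≤ T
            · rw [if_pos hAB, if_neg h, mul_zero]
            · rw [if_neg hAB]
      rw [Finset.sum_congr rfl hterm]
      split_ifs with hc
      · rw [← Finset.mul_sum]
        refine Nat.mul_le_mul_left _ ?_
        rw [← Finset.sum_filter]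
        exact ih B
      · simp
    refine (Finset.sum_le_sum key).trans ?_
    rw [← Finset.sum_mul]
    refine le_trans (Nat.mul_le_mul_right _ (binom_aux m (L i) T)) ?_
    rw [Nat.multinomial_cons]

lemma vandFin (n : ℕ) (L : Fin n → ℕ) (m : ℕ) :
    ∑ j ∈ (Finset.Nat.antidiagonalTuple n m).filter (fun j => ∀ i, j i ≤ L i),
      Nat.multinomial Finset.univ j * Nat.multinomial Finset.univ (fun i => L i - j i)
    ≤ Nat.multinomial Finset.univ L := by
  have h := vand (Finset.univ : Finset (Fin n)) L m
  rw [Finset.piAntidiag_univ_fin_eq_antidiagonalTuple] at h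
  refine le_trans (le_of_eq (Finset.sum_congr ?_ (fun _ _ => rfl))) h
  ext j; simp

lemma step1 (n : ℕ) (hn : 2 ≤ n) (l : ℕ) (L : Fin n → ℕ) (hL : ∀ i, 0 < L i)
    (hsum : ∑ i, L i = l) (m : ℕ) :
    (l - m).factorial * ∑ j ∈ (Finset.Nat.antidiagonalTuple n m).filter (fun j => ∀ i, j i ≤ L i),
        Nat.multinomial Finset.univ j * ∏ i, Nat.choose (L i + 2) (j i + 2)
      ≤ (l+1)^(l-m) * Nat.multinomial Finset.univ L := by
  have hLl : ∀ i, L i + 2 ≤ l + 1 := by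
    intro i
    have : Nontrivial (Fin n) := Fin.nontrivial_iff_two_le.mpr hn
    obtain ⟨i', hi'⟩ := exists_ne i
    have hpair : L i + L i' ≤ l := by
      rw [← hsum]
      calc L i + L i' = ∑ t ∈ ({i, i'} : Finset (Fin n)), L t := by
            rw [Finset.sum_pair (Ne.symm hi')]
        _ ≤ ∑ t, L t := Finset.sum_le_sum_of_subset (Finset.subset_univ _)
    have := hL i'
    omega
  set k := l - m with hk
  rw [Finset.mul_sum]
  have hterm : ∀ j ∈ (Finset.Nat.antidiagonalTuple n m).filter (fun j => ∀ i, j i ≤ L i),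
      k.factorial * (Nat.multinomial Finset.univ j * ∏ i, Nat.choose (L i + 2) (j i + 2))
      ≤ (l+1)^k * (Nat.multinomial Finset.univ j *
          Nat.multinomial Finset.univ (fun i => L i - j i)) := by
    intro j hj
    rw [Finset.mem_filter, Finset.Nat.mem_antidiagonalTuple] at hj
    obtain ⟨hj1, hj2⟩ := hj
    set g : Fin n → ℕ := fun i => L i - j i with hg
    have hgsum : ∑ i, g i = k := by
      rw [hg]
      simp only []
      rw [Finset.sum_tsub_distrib Finset.univ (fun i _ => hj2 i), hsum, hj1]
    have hchoose : ∀ i : Fin n, Nat.choose (L i + 2) (j i + 2) = Nat.choose (L i + 2) (g i) := by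
      intro i
      have h1 : j i + 2 ≤ L i + 2 := by have := hj2 i; omega
      have h2 : L i + 2 - (j i + 2) = g i := by
        simp only [hg]; have := hj2 i; omega
      rw [← h2, Nat.choose_symm h1]
    have hspec : (∏ i, (g i).factorial) * Nat.multinomial Finset.univ g = k.factorial := by
      rw [Nat.multinomial_spec, hgsum]
    calc k.factorial * (Nat.multinomial Finset.univ j * ∏ i, Nat.choose (L i + 2) (j i + 2))
        = Nat.multinomial Finset.univ j *
            (Nat.multinomial Finset.univ g * ((∏ i, (g i).factorial) * ∏ i, Nat.choose (L i + 2) (g i))) := by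
          rw [Finset.prod_congr rfl (fun i _ => hchoose i), ← hspec]; ring
      _ ≤ Nat.multinomial Finset.univ j * (Nat.multinomial Finset.univ g * (l+1)^k) := by
          refine Nat.mul_le_mul_left _ (Nat.mul_le_mul_left _ ?_)
          rw [← Finset.prod_mul_distrib]
          calc ∏ i, ((g i).factorial * Nat.choose (L i + 2) (g i))
              = ∏ i, Nat.descFactorial (L i + 2) (g i) := by
                refine Finset.prod_congr rfl (fun i _ => ?_)
                rw [Nat.descFactorial_eq_factorial_mul_choose]
            _ ≤ ∏ i, (l+1) ^ (g i) := by
                refine Finset.prod_le_prod' (fun i _ => ?_)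
                calc Nat.descFactorial (L i + 2) (g i) ≤ (L i + 2) ^ (g i) :=
                      Nat.descFactorial_le_pow _ _
                  _ ≤ (l+1) ^ (g i) := Nat.pow_le_pow_left (hLl i) _
            _ = (l+1)^k := by rw [Finset.prod_pow_eq_pow_sum, hgsum]
      _ = (l+1)^k * (Nat.multinomial Finset.univ j * Nat.multinomial Finset.univ g) := by ring
  calc ∑ j ∈ (Finset.Nat.antidiagonalTuple n m).filter (fun j => ∀ i, j i ≤ L i),
        k.factorial * (Nat.multinomial Finset.univ j * ∏ i, Nat.choose (L i + 2) (j i + 2))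
      ≤ ∑ j ∈ (Finset.Nat.antidiagonalTuple n m).filter (fun j => ∀ i, j i ≤ L i),
        (l+1)^k * (Nat.multinomial Finset.univ j * Nat.multinomial Finset.univ (fun i => L i - j i)) :=
        Finset.sum_le_sum hterm
    _ = (l+1)^k * ∑ j ∈ (Finset.Nat.antidiagonalTuple n m).filter (fun j => ∀ i, j i ≤ L i),
        Nat.multinomial Finset.univ j * Nat.multinomial Finset.univ (fun i => L i - j i) := by
        rw [Finset.mul_sum]
    _ ≤ (l+1)^k * Nat.multinomial Finset.univ L :=
        Nat.mul_le_mul_left _ (vandFin n L m)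


lemma sq_le_nat {a b : ℕ} (h : a^2 ≤ b^2) : a ≤ b :=
  (pow_le_pow_iff_left₀ (Nat.zero_le a) (Nat.zero_le b) two_ne_zero).mp h

lemma choose2_mul (x : ℕ) : x.choose 2 * 2 = x * (x - 1) := by
  rw [Nat.choose_two_right]
  refine Nat.div_mul_cancel ?_
  rcases x with _ | y
  · simp
  · simpa [Nat.succ_sub_one, mul_comm] using (Nat.even_mul_succ_self y).two_dvd

lemma sqpow {l : ℕ} (hl : 3 ≤ l) : (l+1)^2 ≤ 2^(l+1) := by
  obtain ⟨p, rfl⟩ : ∃ p, l = p + 3 := ⟨l - 3, by omega⟩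
  induction p with
  | zero => norm_num
  | succ q ih =>
    have h := ih (by omega)
    calc (q + 1 + 3 + 1)^2 ≤ 2 * (q + 3 + 1)^2 := by nlinarith
      _ ≤ 2 * 2^(q+3+1) := by omega
      _ = 2^(q+1+3+1) := by ring

lemma pow2a {l k : ℕ} (hl : 3 ≤ l) (hk : k + 2 ≤ l) :
    2^((l-k).choose 2) * (l+1)^k ≤ 2^(l.choose 2) := by
  refine sq_le_nat ?_
  obtain ⟨m, hm⟩ : ∃ m, l = m + k := ⟨l - k, by omega⟩
  subst hm
  rw [mul_pow, ← pow_mul, ← pow_mul, ← pow_mul, choose2_mul, choose2_mul]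
  have h1 : (m + k + 1)^(k*2) ≤ 2^((m+k+1)*k) := by
    calc (m + k + 1)^(k*2) = ((m+k+1)^2)^k := by rw [← pow_mul, mul_comm]
      _ ≤ (2^(m+k+1))^k := Nat.pow_le_pow_left (sqpow hl) k
      _ = 2^((m+k+1)*k) := by rw [← pow_mul]
  have h2 : m + k - k = m := by omega
  rw [h2]
  calc 2^(m*(m-1)) * (m+k+1)^(k*2) ≤ 2^(m*(m-1)) * 2^((m+k+1)*k) := Nat.mul_le_mul_left _ h1
    _ = 2^(m*(m-1) + (m+k+1)*k) := by rw [← pow_add]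
    _ ≤ 2^((m+k)*(m+k-1)) := by
        refine Nat.pow_le_pow_right (by norm_num) ?_
        have h3 : m + k - 1 = m + k - 1 := rfl
        rcases Nat.exists_eq_add_of_le (show 1 ≤ m + k by omega) with ⟨c, hc⟩
        have hm2 : 2 ≤ m := by omega
        nlinarith [Nat.sub_add_cancel (show 1 ≤ m by omega), Nat.sub_add_cancel (show 1 ≤ m + k by omega)]

lemma factlb1 (p : ℕ) : 2^(3*p+2) ≤ ((p+2).factorial)^2 := by
  induction p with
  | zero => norm_num [Nat.factorial]
  | succ q ih =>
    have : (q+1+2).factorial = (q+3) * (q+2).factorial := by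
      rw [show q+1+2 = q+3 by ring, Nat.factorial_succ]
    rw [this, mul_pow]
    calc 2^(3*(q+1)+2) = 8 * 2^(3*q+2) := by ring
      _ ≤ 8 * ((q+2).factorial)^2 := Nat.mul_le_mul_left _ ih
      _ ≤ (q+3)^2 * ((q+2).factorial)^2 := by
          refine Nat.mul_le_mul_right _ ?_
          nlinarith

lemma factlb2 (p : ℕ) : 9 * 2^(4*p+2) ≤ ((p+3).factorial)^2 := by
  induction p with
  | zero => norm_num [Nat.factorial]
  | succ q ih =>
    have : (q+1+3).factorial = (q+4) * (q+3).factorial := by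
      rw [show q+1+3 = q+4 by ring, Nat.factorial_succ]
    rw [this, mul_pow]
    calc 9 * 2^(4*(q+1)+2) = 16 * (9 * 2^(4*q+2)) := by ring
      _ ≤ 16 * ((q+3).factorial)^2 := Nat.mul_le_mul_left _ ih
      _ ≤ (q+4)^2 * ((q+3).factorial)^2 := by
          refine Nat.mul_le_mul_right _ ?_
          nlinarith

lemma pow2b {l : ℕ} (hl : 3 ≤ l) :
    2^(l-1) * (l+1)^(l-1) ≤ 4 * 2^(l.choose 2) * (l-1).factorial := by
  refine sq_le_nat ?_
  obtain ⟨p, rfl⟩ : ∃ p, l = p + 3 := ⟨l - 3, by omega⟩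
  have h1 : p + 3 - 1 = p + 2 := by omega
  rw [h1, mul_pow, mul_pow, mul_pow, ← pow_mul, ← pow_mul, ← pow_mul, choose2_mul]
  have h2 : p + 3 - 1 = p + 2 := rfl
  rw [h2]
  -- goal: 2^((p+2)*2) * (p+4)^((p+2)*2) ≤ 4^2 * 2^((p+3)*(p+2)) * ((p+2)!)^2
  have h3 : (p+4)^((p+2)*2) ≤ 2^((p+4)*(p+2)) := by
    calc (p+4)^((p+2)*2) = ((p+4)^2)^(p+2) := by rw [← pow_mul, mul_comm]
      _ ≤ (2^(p+4))^(p+2) := Nat.pow_le_pow_left (sqpow (by omega)) _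
      _ = 2^((p+4)*(p+2)) := by rw [← pow_mul]
  calc 2^((p+2)*2) * (p+4)^((p+2)*2) ≤ 2^((p+2)*2) * 2^((p+4)*(p+2)) := Nat.mul_le_mul_left _ h3
    _ = 2^((p+3)*(p+2)) * 2^(3*p+2) * 16 := by rw [← pow_add]; ring_nf
    _ ≤ 2^((p+3)*(p+2)) * ((p+2).factorial)^2 * 16 := by
        refine Nat.mul_le_mul_right _ (Nat.mul_le_mul_left _ (factlb1 p))
    _ = 4^2 * 2^((p+3)*(p+2)) * ((p+2).factorial)^2 := by ring_nf

lemma pow2c {l : ℕ} (hl : 3 ≤ l) :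
    3 * (2^l * (l+1)^l) ≤ 32 * 2^(l.choose 2) * l.factorial := by
  refine sq_le_nat ?_
  obtain ⟨p, rfl⟩ : ∃ p, l = p + 3 := ⟨l - 3, by omega⟩
  rw [mul_pow, mul_pow, mul_pow, mul_pow, ← pow_mul, ← pow_mul, ← pow_mul, choose2_mul]
  have h2 : p + 3 - 1 = p + 2 := rfl
  rw [h2]
  have h3 : (p+4)^((p+3)*2) ≤ 2^((p+4)*(p+3)) := by
    calc (p+4)^((p+3)*2) = ((p+4)^2)^(p+3) := by rw [← pow_mul, mul_comm]
      _ ≤ (2^(p+4))^(p+3) := Nat.pow_le_pow_left (sqpow (by omega)) _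
      _ = 2^((p+4)*(p+3)) := by rw [← pow_mul]
  calc 3^2 * (2^((p+3)*2) * (p+4)^((p+3)*2))
      ≤ 3^2 * (2^((p+3)*2) * 2^((p+4)*(p+3))) :=
        Nat.mul_le_mul_left _ (Nat.mul_le_mul_left _ h3)
    _ = 2^((p+3)*(p+2)) * (9 * 2^(4*p+2)) * 2^10 := by rw [← pow_add]; ring_nf
    _ ≤ 2^((p+3)*(p+2)) * ((p+3).factorial)^2 * 2^10 := by
        exact Nat.mul_le_mul_right _ (Nat.mul_le_mul_left _ (factlb2 p))
    _ = 32^2 * 2^((p+3)*(p+2)) * ((p+3).factorial)^2 := by ring_nf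

theorem stmt_13 (n : ℕ) (hn : 2 ≤ n) (l : ℕ) (hl : 3 ≤ l) (L : Fin n → ℕ)
    (hL : ∀ i, 0 < L i) (hsum : ∑ i, L i = l)
    (a : ℕ → ℕ)
    (ha : ∀ k, a k = 2 ^ (Nat.choose (l - k) 2) *
      ∑ j ∈ (Finset.Nat.antidiagonalTuple n (l - k)).filter (fun j => ∀ i, j i ≤ L i),
        Nat.multinomial Finset.univ j * ∏ i, Nat.choose (L i + 2) (j i + 2)) :
    (1 / 2) * (∑ k ∈ Finset.Icc 1 l, (2 : ℝ) ^ k * (a k : ℝ)) +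
        2 ^ (Nat.choose l 2) * (Nat.multinomial Finset.univ L : ℝ) <
      (Real.exp 4 + 3) / 4 * 2 ^ (Nat.choose l 2) * (Nat.multinomial Finset.univ L : ℝ) := by
  set M : ℕ := Nat.multinomial Finset.univ L with hM
  -- basic ℕ step bound
  have hstep : ∀ k, k ≤ l → k.factorial * a k ≤ 2^((l-k).choose 2) * ((l+1)^k * M) := by
    intro k hk
    rw [ha k]
    have h := step1 n hn l L hL hsum (l - k)
    rw [Nat.sub_sub_self hk] at h
    rw [mul_left_comm]
    exact Nat.mul_le_mul_left _ h
  -- b1 (ℕ): for k ≤ l - 2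
  have hb1n : ∀ k, k + 2 ≤ l → k.factorial * a k ≤ 2^(l.choose 2) * M := by
    intro k hk
    calc k.factorial * a k ≤ 2^((l-k).choose 2) * ((l+1)^k * M) := hstep k (by omega)
      _ = (2^((l-k).choose 2) * (l+1)^k) * M := by ring
      _ ≤ 2^(l.choose 2) * M := Nat.mul_le_mul_right _ (pow2a hl hk)
  -- b2 (ℕ)
  have hb2n : 2^(l-1) * a (l-1) ≤ 4 * (2^(l.choose 2) * M) := by
    have h := hstep (l-1) (by omega)
    rw [show l - (l-1) = 1 by omega, show Nat.choose 1 2 = 0 by decide, pow_zero, one_mul] at h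
    have hfp : 0 < (l-1).factorial := Nat.factorial_pos _
    refine Nat.le_of_mul_le_mul_left ?_ hfp
    calc (l-1).factorial * (2^(l-1) * a (l-1))
        = 2^(l-1) * ((l-1).factorial * a (l-1)) := by ring
      _ ≤ 2^(l-1) * ((l+1)^(l-1) * M) := Nat.mul_le_mul_left _ h
      _ = (2^(l-1) * (l+1)^(l-1)) * M := by ring
      _ ≤ (4 * 2^(l.choose 2) * (l-1).factorial) * M := Nat.mul_le_mul_right _ (pow2b hl)
      _ = (l-1).factorial * (4 * (2^(l.choose 2) * M)) := by ring
  -- b3 (ℕ)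
  have hb3n : 3 * (2^l * a l) ≤ 32 * (2^(l.choose 2) * M) := by
    have h := hstep l le_rfl
    rw [Nat.sub_self, show Nat.choose 0 2 = 0 by decide, pow_zero, one_mul] at h
    have hfp : 0 < l.factorial := Nat.factorial_pos _
    refine Nat.le_of_mul_le_mul_left ?_ hfp
    calc l.factorial * (3 * (2^l * a l))
        = 3 * (2^l * (l.factorial * a l)) := by ring
      _ ≤ 3 * (2^l * ((l+1)^l * M)) := by
          exact Nat.mul_le_mul_left _ (Nat.mul_le_mul_left _ h)
      _ = (3 * (2^l * (l+1)^l)) * M := by ring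
      _ ≤ (32 * 2^(l.choose 2) * l.factorial) * M := Nat.mul_le_mul_right _ (pow2c hl)
      _ = l.factorial * (32 * (2^(l.choose 2) * M)) := by ring
  -- real versions
  set C : ℝ := 2 ^ (Nat.choose l 2) * (M : ℝ) with hC
  have hCpos : 0 < C := by
    have : 0 < M := Nat.multinomial_pos _ _
    positivity
  obtain ⟨p, rfl⟩ : ∃ p, l = p + 3 := ⟨l - 3, by omega⟩
  have hsplit : Finset.Icc 1 (p+3) = insert (p+3) (insert (p+2) (Finset.Icc 1 (p+1))) := by
    ext x
    simp only [Finset.mem_Icc, Finset.mem_insert]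
    omega
  have hb1r : ∀ k ∈ Finset.Icc 1 (p+1), (2:ℝ)^k * (a k : ℝ) ≤ 2^k / k.factorial * C := by
    intro k hk
    rw [Finset.mem_Icc] at hk
    have h := hb1n k (by omega)
    have hcast : (k.factorial : ℝ) * (a k : ℝ) ≤ C := by
      rw [hC]
      exact_mod_cast h
    have hfp : (0:ℝ) < k.factorial := by positivity
    rw [div_mul_eq_mul_div, le_div_iff₀ hfp]
    calc (2:ℝ)^k * (a k) * k.factorial = 2^k * ((k.factorial) * (a k)) := by ring
      _ ≤ 2^k * C := by
          refine mul_le_mul_of_nonneg_left hcast (by positivity)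
  have hb2r : (2:ℝ)^(p+2) * (a (p+2) : ℝ) ≤ 4 * C := by
    have h := hb2n
    rw [show p + 3 - 1 = p + 2 by omega] at h
    rw [hC]
    exact_mod_cast h
  have hb3r : (2:ℝ)^(p+3) * (a (p+3) : ℝ) ≤ 32/3 * C := by
    have h := hb3n
    have hcast : (3:ℝ) * (2^(p+3) * (a (p+3) : ℝ)) ≤ 32 * C := by
      rw [hC]
      exact_mod_cast h
    linarith
  -- exp sum bound
  have hexp : ∑ k ∈ Finset.Icc 1 (p+1), (2:ℝ)^k / k.factorial ≤ Real.exp 2 - 1 := by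
    have h0 : (0:ℕ) ∉ Finset.Icc 1 (p+1) := by simp
    have hins : insert 0 (Finset.Icc 1 (p+1)) = Finset.range (p+2) := by
      ext x
      simp only [Finset.mem_insert, Finset.mem_Icc, Finset.mem_range]
      omega
    have h := Real.sum_le_exp_of_nonneg (by norm_num : (0:ℝ) ≤ 2) (p+2)
    rw [← hins, Finset.sum_insert h0] at h
    simp only [pow_zero, Nat.factorial_zero, Nat.cast_one, div_one] at h
    linarith
  -- combine the sum
  have hsum2 : ∑ k ∈ Finset.Icc 1 (p+3), (2:ℝ)^k * (a k : ℝ)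
      ≤ (Real.exp 2 - 1) * C + 4 * C + 32/3 * C := by
    rw [hsplit, Finset.sum_insert (by simp), Finset.sum_insert (by simp)]
    have hs1 : ∑ k ∈ Finset.Icc 1 (p+1), (2:ℝ)^k * (a k : ℝ)
        ≤ (Real.exp 2 - 1) * C := by
      calc ∑ k ∈ Finset.Icc 1 (p+1), (2:ℝ)^k * (a k : ℝ)
          ≤ ∑ k ∈ Finset.Icc 1 (p+1), (2:ℝ)^k / k.factorial * C :=
            Finset.sum_le_sum hb1r
        _ = (∑ k ∈ Finset.Icc 1 (p+1), (2:ℝ)^k / k.factorial) * C := by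
            rw [Finset.sum_mul]
        _ ≤ (Real.exp 2 - 1) * C := by
            refine mul_le_mul_of_nonneg_right hexp hCpos.le
    linarith
  -- final numeric step
  have hgoal : (1/2) * ((Real.exp 2 - 1) * C + 4 * C + 32/3 * C) + C
      < (Real.exp 4 + 3) / 4 * C := by
    have he2 : (7.389:ℝ) < Real.exp 2 := by
      have h1 : (2.7182818283:ℝ) < Real.exp 1 := Real.exp_one_gt_d9
      have h2 : Real.exp 2 = Real.exp 1 * Real.exp 1 := by
        rw [← Real.exp_add]; norm_num
      nlinarith [Real.exp_pos 1]
    have he4 : Real.exp 4 = Real.exp 2 * Real.exp 2 := by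
      rw [← Real.exp_add]; norm_num
    rw [he4]
    nlinarith [hCpos, sq_nonneg (Real.exp 2 - 7.389)]
  calc (1/2) * (∑ k ∈ Finset.Icc 1 (p+3), (2:ℝ)^k * (a k : ℝ)) + C
      ≤ (1/2) * ((Real.exp 2 - 1) * C + 4 * C + 32/3 * C) + C := by linarith
    _ < (Real.exp 4 + 3) / 4 * C := hgoal
    _ = (Real.exp 4 + 3) / 4 * 2 ^ (Nat.choose (p+3) 2) * (M : ℝ) := by
        rw [hC]; ring
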